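/- Assume k ∣ q−1, let δ be an integer with 1 ≤ δ ≤ q²−1, and let β = (γ^δ·α_1, …, γ^δ·α_k) ∈ F_{q²}^k (so n = k). If k = 2ℓ and (k : F_{q²})·γ^{δ(k−ℓ+ℓq)} + Σ_{i=1}^{ℓ} a_{1i}^{1+q} = 0 in F_{q²}, then the Hermitian hull of GRL_k(β, A) has F_{q²}-dimension exactly 1. -/
import Mathlib

open Matrix BigOperators Finset

/-- Hermitian dual (with respect to `x ↦ x ^ q`) of a code `C ⊆ F^ι`. -/
def dualH {F : Type} [Field F] (q : ℕ) {ι : Type} [Fintype ι] (C : Submodule F (ι → F)) :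
    Submodule F (ι → F) where
  carrier := {x | ∀ y ∈ C, ∑ i, x i * y i ^ q = 0}
  add_mem' := by
    intro a b ha hb y hy
    have h : ∑ i, (a + b) i * y i ^ q = (∑ i, a i * y i ^ q) + ∑ i, b i * y i ^ q := by
      rw [← Finset.sum_add_distrib]
      exact Finset.sum_congr rfl fun i _ => add_mul _ _ _
    rw [h, ha y hy, hb y hy, add_zero]
  zero_mem' := by intro y hy; simp
  smul_mem' := by
    intro c a ha y hy
    have h : ∑ i, (c • a) i * y i ^ q = c * ∑ i, a i * y i ^ q := by
      rw [Finset.mul_sum]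
      exact Finset.sum_congr rfl fun i _ => by
        simp [Pi.smul_apply, smul_eq_mul, mul_assoc]
    rw [h, ha y hy, mul_zero]

/-- Generator matrix of the generalized Roth–Lempel code: evaluation columns indexed by `ι`
(entry `β j ^ r`), extra columns indexed by `Fin ℓ` (zero for rows `r < k - ℓ`, and the
corresponding row of `A` for rows `k - ℓ ≤ r ≤ k - 1`). -/
def GRLmatrix {F : Type} [Field F] (k ℓ : ℕ) (hℓk : ℓ ≤ k) {ι : Type} (β : ι → F)
    (A : Matrix (Fin ℓ) (Fin ℓ) F) : Matrix (Fin k) (ι ⊕ Fin ℓ) F :=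
  fun r => Sum.elim (fun j => β j ^ (r : ℕ))
    (fun j' => if _h : (r : ℕ) < k - ℓ then 0
      else A ⟨(r : ℕ) - (k - ℓ), by have := r.isLt; omega⟩ j')

/-- The generalized Roth–Lempel code: the row span of `GRLmatrix`. -/
def GRLcode {F : Type} [Field F] (k ℓ : ℕ) (hℓk : ℓ ≤ k) {ι : Type} (β : ι → F)
    (A : Matrix (Fin ℓ) (Fin ℓ) F) : Submodule F ((ι ⊕ Fin ℓ) → F) :=
  Submodule.span F (Set.range (GRLmatrix k ℓ hℓk β A))

open scoped Classical in
lemma geom_aux {F : Type} [Field F] (k : ℕ) (x : F) (hx : x ^ k = 1) :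
    ∑ j : Fin k, x ^ ((j:ℕ)+1) = if x = 1 then (k:F) else 0 := by
  split_ifs with h
  · simp [h]
  · have h1 : ∑ j : Fin k, x ^ ((j:ℕ)+1) = ∑ j ∈ range k, x ^ (j+1) :=
      Fin.sum_univ_eq_sum_range (fun j => x ^ (j+1)) k
    rw [h1]
    have h2 : ∑ j ∈ range k, x ^ (j+1) = x * ∑ j ∈ range k, x ^ j := by
      rw [mul_sum]; exact sum_congr rfl fun j _ => by ring
    rw [h2, geom_sum_eq h, hx, sub_self, zero_div, mul_zero]

/-- with `k ∣ q - 1`, `β = (γ^δ·α_1, …, γ^δ·α_k)`, `k = 2ℓ` and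
`k·γ^{δ(k-ℓ+ℓq)} + Σ a_{1i}^{1+q} = 0`, the Hermitian hull of the GRL code has dimension
exactly `1`. -/
theorem stmt13 {F : Type} [Field F] [Fintype F]
    (q p m : ℕ) (hp : p.Prime) (hodd : Odd p) (hm : 0 < m) (hq : q = p ^ m)
    (hcard : Fintype.card F = q ^ 2)
    (γ : Fˣ) (hγ : ∀ x : Fˣ, x ∈ Subgroup.zpowers γ)
    (k ℓ : ℕ) (hℓ2 : 2 ≤ ℓ) (hℓk : ℓ ≤ k) (hkdvd : k ∣ q ^ 2 - 1)
    (A : Matrix (Fin ℓ) (Fin ℓ) F) (hA : IsUnit A.det)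
    (α : Fin k → F)
    (hα : ∀ i : Fin k, α i = (γ : F) ^ ((q ^ 2 - 1) / k * ((i : ℕ) + 1)))
    (hkq : k ∣ q - 1)
    (δ : ℕ) (hδ1 : 1 ≤ δ) (hδq : δ ≤ q ^ 2 - 1)
    (β : Fin k → F) (hβ : ∀ i, β i = (γ : F) ^ δ * α i)
    (hk2ℓ : k = 2 * ℓ)
    (hzero : (k : F) * (γ : F) ^ (δ * (k - ℓ + ℓ * q)) +
      ∑ i : Fin ℓ, A ⟨0, by omega⟩ i ^ (1 + q) = 0) :
    Module.finrank F ↥(GRLcode k ℓ hℓk β A ⊓ dualH q (GRLcode k ℓ hℓk β A)) = 1 := by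
  classical
  -- numeric preliminaries
  have hp2 : 2 ≤ p := hp.two_le
  have hq2 : 2 ≤ q := by
    have h1 : 1 < p ^ m := Nat.one_lt_pow (by omega) (by omega)
    omega
  have hk4 : 4 ≤ k := by omega
  have hq21pos : 0 < q ^ 2 - 1 := by nlinarith
  have hkle : k ≤ q ^ 2 - 1 := Nat.le_of_dvd hq21pos hkdvd
  set e := (q ^ 2 - 1) / k with he
  have hek : k * e = q ^ 2 - 1 := Nat.mul_div_cancel' hkdvd
  have hepos : 0 < e := Nat.div_pos hkle (by omega)
  have hℓ0 : 0 < ℓ := by omega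
  have hℓk' : ℓ < k := by omega
  have hkl : k - ℓ = ℓ := by omega
  -- characteristic
  haveI hfact : Fact p.Prime := ⟨hp⟩
  haveI hchar : CharP F p := by
    obtain ⟨p', hc⟩ := CharP.exists F
    haveI := hc
    obtain ⟨n, hp', hcard'⟩ := FiniteField.card F p'
    have h1 : p' ∣ p ^ (2 * m) := by
      have h2 : p' ∣ p' ^ (n : ℕ) := dvd_pow_self p' n.ne_zero
      rw [← hcard', hcard, hq, ← pow_mul, mul_comm m 2] at h2
      exact h2
    have h3 : p' = p := (Nat.prime_dvd_prime_iff_eq hp' hp).mp (hp'.dvd_of_dvd_pow h1)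
    rwa [h3] at hc
  have hfrob : ∀ a b : F, (a + b) ^ q = a ^ q + b ^ q := by
    intro a b; rw [hq]; exact add_pow_char_pow a b p m
  have hkF : (k : F) ≠ 0 := by
    intro h
    have hpk : p ∣ k := (CharP.cast_eq_zero_iff F p k).mp h
    have hpq1 : p ∣ q - 1 := hpk.trans hkq
    have hpq : p ∣ q := by rw [hq]; exact dvd_pow_self p (by omega)
    have h1 : p ∣ q - (q - 1) := Nat.dvd_sub hpq hpq1
    rw [(by omega : q - (q - 1) = 1)] at h1
    have := Nat.le_of_dvd one_pos h1
    omega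
  set g : F := (γ : F) with hg
  have hgne : g ≠ 0 := γ.ne_zero
  have hXne : ∀ n : ℕ, (k : F) * g ^ n ≠ 0 := fun n => mul_ne_zero hkF (pow_ne_zero _ hgne)
  have horder : ∀ t : ℕ, g ^ t = 1 ↔ (q ^ 2 - 1) ∣ t := by
    intro t
    have ho : orderOf γ = q ^ 2 - 1 := by
      rw [orderOf_eq_card_of_forall_mem_zpowers hγ, Nat.card_units, Nat.card_eq_fintype_card,
        hcard]
    rw [← ho, ← orderOf_units, orderOf_dvd_iff_pow_eq_one]
  have hζ1 : ∀ t : ℕ, g ^ (e * t) = 1 ↔ k ∣ t := by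
    intro t
    rw [horder, ← hek, mul_comm k e]
    exact Nat.mul_dvd_mul_iff_left hepos
  have hgq : g ^ (q ^ 2 - 1) = 1 := (horder _).mpr dvd_rfl
  have hdvdshift : ∀ r s : ℕ, (k ∣ r + s * q) ↔ (k ∣ r + s) := by
    intro r s
    have h2 : q - 1 + 1 = q := by omega
    have h1 : r + s * q = s * (q - 1) + (r + s) := by
      calc r + s * q = r + s * (q - 1 + 1) := by rw [h2]
        _ = s * (q - 1) + (r + s) := by ring
    rw [h1]
    exact Nat.dvd_add_right (Dvd.dvd.mul_left hkq s)
  have hdvd_window : ∀ n : ℕ, k ∣ n → n = 0 ∨ n = k ∨ 2 * k ≤ n := by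
    rintro n ⟨c, hc⟩
    rcases c with _ | _ | c
    · left; omega
    · right; left; omega
    · right; right
      have h1 : k * 2 ≤ k * (c + 1 + 1) := Nat.mul_le_mul_left k (by omega)
      omega
  set G := GRLmatrix k ℓ hℓk β A with hG
  have hcode : GRLcode k ℓ hℓk β A = Submodule.span F (Set.range G) := rfl
  set M : Fin k → Fin k → F := fun r s => ∑ i, G r i * (G s i) ^ q with hMdef
  have hmem : ∀ x : (Fin k ⊕ Fin ℓ) → F, x ∈ dualH q (GRLcode k ℓ hℓk β A) ↔
      ∀ y ∈ GRLcode k ℓ hℓk β A, ∑ i, x i * y i ^ q = 0 := fun x => Iff.rfl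
  -- entries of G
  have hGinl : ∀ (r : Fin k) (j : Fin k), G r (Sum.inl j) = (β j) ^ (r : ℕ) := fun r j => rfl
  have hGlow : ∀ (r : Fin k), (r : ℕ) < ℓ → ∀ j', G r (Sum.inr j') = 0 := by
    intro r hr j'
    simp only [hG, GRLmatrix, Sum.elim_inr]
    rw [dif_pos (by omega)]
  have hAeq : ∀ (i i' : ℕ) (h : i < ℓ) (h' : i' < ℓ), i = i' → ∀ j : Fin ℓ,
      A ⟨i, h⟩ j = A ⟨i', h'⟩ j := by
    intro i i' h h' hii j; cases hii; rfl
  have hGhigh : ∀ (r : Fin k), ℓ ≤ (r : ℕ) → ∀ j' : Fin ℓ,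
      G r (Sum.inr j') = A ⟨((r : ℕ) - ℓ) % ℓ, Nat.mod_lt _ hℓ0⟩ j' := by
    intro r hr j'
    simp only [hG, GRLmatrix, Sum.elim_inr]
    rw [dif_neg (by omega)]
    refine hAeq _ _ _ _ ?_ j'
    have hlt : (r : ℕ) - ℓ < ℓ := by have := r.isLt; omega
    have := Nat.mod_eq_of_lt hlt
    omega
  -- the Gram computation
  have hgram : ∀ r s : Fin k,
      M r s = (if k ∣ ((r : ℕ) + (s : ℕ)) then (k : F) * g ^ (δ * ((r : ℕ) + (s : ℕ) * q)) else 0)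
        + ∑ j' : Fin ℓ, G r (Sum.inr j') * (G s (Sum.inr j')) ^ q := by
    intro r s
    have hsplit : M r s = (∑ j : Fin k, G r (Sum.inl j) * (G s (Sum.inl j)) ^ q)
        + ∑ j' : Fin ℓ, G r (Sum.inr j') * (G s (Sum.inr j')) ^ q := Fintype.sum_sum_type _
    rw [hsplit]
    congr 1
    have hbj : ∀ j : Fin k, β j = g ^ (δ + e * ((j : ℕ) + 1)) := by
      intro j; rw [hβ, hα, ← pow_add]
    have hterm : ∀ j : Fin k, G r (Sum.inl j) * (G s (Sum.inl j)) ^ q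
        = g ^ (δ * ((r : ℕ) + (s : ℕ) * q)) * (g ^ (e * ((r : ℕ) + (s : ℕ) * q))) ^ ((j : ℕ) + 1) := by
      intro j
      rw [hGinl, hGinl, hbj j,
        ← pow_mul (g ^ (δ + e * ((j : ℕ) + 1))) (s : ℕ) q,
        ← pow_mul g (δ + e * ((j : ℕ) + 1)) ((s : ℕ) * q),
        ← pow_mul g (δ + e * ((j : ℕ) + 1)) (r : ℕ),
        ← pow_add g,
        ← pow_mul g (e * ((r : ℕ) + (s : ℕ) * q)) ((j : ℕ) + 1),
        ← pow_add g]
      congr 1; ring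
    rw [Finset.sum_congr rfl (fun j _ => hterm j), ← Finset.mul_sum]
    have hxk : (g ^ (e * ((r : ℕ) + (s : ℕ) * q))) ^ k = 1 := by
      rw [← pow_mul]
      have h1 : e * ((r : ℕ) + (s : ℕ) * q) * k = (q ^ 2 - 1) * ((r : ℕ) + (s : ℕ) * q) := by
        rw [← hek]; ring
      rw [h1, pow_mul, hgq, one_pow]
    rw [geom_aux k _ hxk]
    by_cases hd : k ∣ ((r : ℕ) + (s : ℕ))
    · rw [if_pos hd, if_pos ((hζ1 _).mpr ((hdvdshift _ _).mpr hd)), mul_comm]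
    · rw [if_neg hd, if_neg, mul_zero]
      intro hx; exact hd ((hdvdshift _ _).mp ((hζ1 _).mp hx))
  -- M values
  have hM0 : ∀ r s : Fin k, ¬ (k ∣ (r : ℕ) + (s : ℕ)) → ((r : ℕ) < ℓ ∨ (s : ℕ) < ℓ) →
      M r s = 0 := by
    intro r s hd hlow
    rw [hgram r s, if_neg hd, zero_add]
    refine Finset.sum_eq_zero (fun j' _ => ?_)
    rcases hlow with h | h
    · rw [hGlow r h, zero_mul]
    · rw [hGlow s h, zero_pow (by omega : q ≠ 0), mul_zero]
  have hMkey : ∀ r s : Fin k, (k ∣ (r : ℕ) + (s : ℕ)) → ((r : ℕ) < ℓ ∨ (s : ℕ) < ℓ) →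
      M r s = (k : F) * g ^ (δ * ((r : ℕ) + (s : ℕ) * q)) := by
    intro r s hd hlow
    rw [hgram r s, if_pos hd]
    have h1 : ∑ j' : Fin ℓ, G r (Sum.inr j') * (G s (Sum.inr j')) ^ q = 0 := by
      refine Finset.sum_eq_zero (fun j' _ => ?_)
      rcases hlow with h | h
      · rw [hGlow r h, zero_mul]
      · rw [hGlow s h, zero_pow (by omega : q ≠ 0), mul_zero]
    rw [h1, add_zero]
  set Bv : ℕ → F := fun t => ∑ i : Fin ℓ, A ⟨0, hℓ0⟩ i * (A ⟨t % ℓ, Nat.mod_lt _ hℓ0⟩ i) ^ q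
    with hBv
  have hMhh : ∀ r s : Fin k, (r : ℕ) = ℓ → ℓ < (s : ℕ) → M r s = Bv ((s : ℕ) - ℓ) := by
    intro r s hr hs
    have hsk := s.isLt
    have hd : ¬ (k ∣ (r : ℕ) + (s : ℕ)) := by
      intro hdvd
      rcases hdvd_window _ hdvd with h | h | h <;> omega
    rw [hgram r s, if_neg hd, zero_add]
    simp only [hBv]
    refine Finset.sum_congr rfl (fun i _ => ?_)
    rw [hGhigh r (by omega), hGhigh s (by omega),
      hAeq (((r : ℕ) - ℓ) % ℓ) 0 _ hℓ0 (by rw [hr]; simp) i]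
  have hMll : ∀ r s : Fin k, (r : ℕ) = ℓ → (s : ℕ) = ℓ → M r s = 0 := by
    intro r s hr hs
    have hd : k ∣ (r : ℕ) + (s : ℕ) := ⟨1, by omega⟩
    rw [hgram r s, if_pos hd]
    have h1 : ∑ j' : Fin ℓ, G r (Sum.inr j') * (G s (Sum.inr j')) ^ q
        = ∑ i : Fin ℓ, A ⟨0, hℓ0⟩ i ^ (1 + q) := by
      refine Finset.sum_congr rfl (fun i _ => ?_)
      have hr0 : ((r : ℕ) - ℓ) % ℓ = 0 := by rw [hr]; simp
      have hs0 : ((s : ℕ) - ℓ) % ℓ = 0 := by rw [hs]; simp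
      rw [hGhigh r (by omega), hGhigh s (by omega),
        hAeq _ 0 _ hℓ0 hr0 i, hAeq _ 0 _ hℓ0 hs0 i, pow_add, pow_one]
    rw [h1]
    have hexp : δ * ((r : ℕ) + (s : ℕ) * q) = δ * (k - ℓ + ℓ * q) := by
      congr 1
      rw [hr, hs, hkl]
    rw [hexp]
    exact hzero
  -- the kernel vector
  set cstar : Fin k → F := fun r =>
    if (r : ℕ) = ℓ then 1
    else if 1 ≤ (r : ℕ) ∧ (r : ℕ) < ℓ then
      -Bv (ℓ - (r : ℕ)) * ((k : F) * g ^ (δ * ((r : ℕ) + (2 * ℓ - (r : ℕ)) * q)))⁻¹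
    else 0 with hcstar
  have hcstar0 : ∀ r : Fin k, ((r : ℕ) = 0 ∨ ℓ < (r : ℕ)) → cstar r = 0 := by
    intro r hr
    simp only [hcstar]
    rw [if_neg (by omega), if_neg (by omega)]
  have hcstarl : ∀ r : Fin k, (r : ℕ) = ℓ → cstar r = 1 := by
    intro r hr; simp only [hcstar]; rw [if_pos hr]
  have hcstarmid : ∀ r : Fin k, 1 ≤ (r : ℕ) → (r : ℕ) < ℓ →
      cstar r = -Bv (ℓ - (r : ℕ)) * ((k : F) * g ^ (δ * ((r : ℕ) + (2 * ℓ - (r : ℕ)) * q)))⁻¹ := by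
    intro r h1 h2; simp only [hcstar]; rw [if_neg (by omega), if_pos ⟨h1, h2⟩]
  obtain ⟨rℓ, hrℓv⟩ : ∃ rℓ : Fin k, (rℓ : ℕ) = ℓ := ⟨⟨ℓ, hℓk'⟩, rfl⟩
  -- cstar is in the left kernel of M
  have hker : ∀ s : Fin k, ∑ r : Fin k, cstar r * M r s = 0 := by
    intro s
    have hsk := s.isLt
    by_cases hsl : (s : ℕ) ≤ ℓ
    · refine Finset.sum_eq_zero (fun r _ => ?_)
      have hrk := r.isLt
      by_cases h0 : (r : ℕ) = 0 ∨ ℓ < (r : ℕ)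
      · rw [hcstar0 r h0, zero_mul]
      · push_neg at h0
        by_cases hll : (r : ℕ) = ℓ ∧ (s : ℕ) = ℓ
        · rw [hMll r s hll.1 hll.2, mul_zero]
        · rw [hM0 r s ?_ (by omega), mul_zero]
          intro hdvd
          rcases hdvd_window _ hdvd with h | h | h <;> omega
    · push_neg at hsl
      obtain ⟨r1, hr1v⟩ : ∃ r1 : Fin k, (r1 : ℕ) = 2 * ℓ - (s : ℕ) := ⟨⟨_, by omega⟩, rfl⟩
      have hne12 : r1 ≠ rℓ := by
        intro h; rw [h, hrℓv] at hr1v; omega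
      have hsum : ∑ r : Fin k, cstar r * M r s = cstar r1 * M r1 s + cstar rℓ * M rℓ s := by
        refine Finset.sum_eq_add_of_mem r1 rℓ (mem_univ _) (mem_univ _) hne12
          (fun r' _ hc' => ?_)
        obtain ⟨ha, hb⟩ := hc'
        have hv1 : (r' : ℕ) ≠ (r1 : ℕ) := fun h => ha (Fin.ext h)
        have hv2 : (r' : ℕ) ≠ (rℓ : ℕ) := fun h => hb (Fin.ext h)
        have hrk' := r'.isLt
        by_cases h0 : (r' : ℕ) = 0 ∨ ℓ < (r' : ℕ)
        · rw [hcstar0 r' h0, zero_mul]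
        · push_neg at h0
          rw [hM0 r' s ?_ (Or.inl (by omega)), mul_zero]
          intro hdvd
          rcases hdvd_window _ hdvd with h | h | h <;> omega
      rw [hsum, hcstarl rℓ hrℓv, one_mul, hMhh rℓ s hrℓv hsl,
        hMkey r1 s ⟨1, by omega⟩ (Or.inl (by omega)),
        hcstarmid r1 (by omega) (by omega)]
      have e1 : ℓ - (r1 : ℕ) = (s : ℕ) - ℓ := by omega
      have e2 : 2 * ℓ - (r1 : ℕ) = (s : ℕ) := by omega
      rw [e1, e2, mul_assoc, inv_mul_cancel₀ (hXne _), mul_one]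
      exact neg_add_cancel _
  -- the hull vector
  set w : (Fin k ⊕ Fin ℓ) → F := fun i => ∑ r : Fin k, cstar r * G r i with hw
  have hwsum : w = ∑ r : Fin k, cstar r • G r := by
    funext i
    rw [Finset.sum_apply]
    exact Finset.sum_congr rfl (fun r _ => rfl)
  have hwC : w ∈ GRLcode k ℓ hℓk β A := by
    rw [hcode, hwsum]
    exact Submodule.sum_mem _ (fun r _ => Submodule.smul_mem _ _ (Submodule.subset_span ⟨r, rfl⟩))
  have hpair : ∀ (x : (Fin k ⊕ Fin ℓ) → F) (s : Fin k) (c : Fin k → F),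
      (∀ i, x i = ∑ r, c r * G r i) → ∑ i, x i * (G s i) ^ q = ∑ r, c r * M r s := by
    intro x s c hx
    calc ∑ i, x i * (G s i) ^ q = ∑ i, ∑ r, c r * G r i * (G s i) ^ q := by
          refine Finset.sum_congr rfl (fun i _ => ?_)
          rw [hx i, Finset.sum_mul]
      _ = ∑ r, ∑ i, c r * G r i * (G s i) ^ q := Finset.sum_comm
      _ = ∑ r, c r * M r s := by
          refine Finset.sum_congr rfl (fun r _ => ?_)
          simp only [hMdef]
          rw [Finset.mul_sum]
          exact Finset.sum_congr rfl (fun i _ => mul_assoc _ _ _)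
  have hwD : w ∈ dualH q (GRLcode k ℓ hℓk β A) := by
    rw [hmem w, hcode]
    intro y hy
    induction hy using Submodule.span_induction with
    | mem y hy =>
        obtain ⟨s, rfl⟩ := hy
        rw [hpair w s cstar (fun i => rfl)]
        exact hker s
    | zero => simp [zero_pow (by omega : q ≠ 0)]
    | add y z hy hz ihy ihz =>
        have h1 : ∀ i, w i * (y + z) i ^ q = w i * y i ^ q + w i * z i ^ q := by
          intro i; rw [Pi.add_apply, hfrob, mul_add]
        rw [Finset.sum_congr rfl (fun i _ => h1 i), Finset.sum_add_distrib, ihy, ihz, add_zero]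
    | smul a y hy ihy =>
        have h1 : ∀ i, w i * (a • y) i ^ q = a ^ q * (w i * y i ^ q) := by
          intro i; rw [Pi.smul_apply, smul_eq_mul, mul_pow]; ring
        rw [Finset.sum_congr rfl (fun i _ => h1 i), ← Finset.mul_sum, ihy, mul_zero]
  have hwne : w ≠ 0 := by
    have hrow : ∃ j0 : Fin ℓ, A ⟨0, hℓ0⟩ j0 ≠ 0 := by
      by_contra hcon; push_neg at hcon
      exact hA.ne_zero (Matrix.det_eq_zero_of_row_eq_zero ⟨0, hℓ0⟩ hcon)
    obtain ⟨j0, hj0⟩ := hrow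
    have hsum : ∑ r : Fin k, cstar r * G r (Sum.inr j0) = cstar rℓ * G rℓ (Sum.inr j0) := by
      refine Finset.sum_eq_single rℓ (fun r _ hne' => ?_) (fun h => absurd (mem_univ _) h)
      have hv : (r : ℕ) ≠ (rℓ : ℕ) := fun h => hne' (Fin.ext h)
      by_cases hlow : (r : ℕ) < ℓ
      · rw [hGlow r hlow, mul_zero]
      · rw [hcstar0 r (Or.inr (by omega)), zero_mul]
    have hwj : w (Sum.inr j0) = A ⟨0, hℓ0⟩ j0 := by
      simp only [hw]
      rw [hsum, hcstarl rℓ hrℓv, one_mul, hGhigh rℓ (by omega)]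
      exact hAeq _ _ _ _ (by rw [hrℓv]; simp) j0
    intro hweq
    rw [hweq] at hwj
    exact hj0 (by simpa using hwj.symm)
  -- the hull is the span of w
  have hHull : GRLcode k ℓ hℓk β A ⊓ dualH q (GRLcode k ℓ hℓk β A) = Submodule.span F {w} := by
    apply le_antisymm
    · intro x hx
      rw [Submodule.mem_inf] at hx
      obtain ⟨hxC, hxD⟩ := hx
      rw [hcode] at hxC
      obtain ⟨c, hc⟩ := (Submodule.mem_span_range_iff_exists_fun F).mp hxC
      have hxi : ∀ i, x i = ∑ r, c r * G r i := by
        intro i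
        rw [← hc, Finset.sum_apply]
        exact Finset.sum_congr rfl (fun r _ => rfl)
      have hcol : ∀ s : Fin k, ∑ r, c r * M r s = 0 := by
        intro s
        rw [← hpair x s c hxi]
        exact (hmem x).mp hxD (G s) (by rw [hcode]; exact Submodule.subset_span ⟨s, rfl⟩)
      have hchigh : ∀ r : Fin k, ℓ < (r : ℕ) → c r = 0 := by
        intro r hr
        have hrk := r.isLt
        obtain ⟨s1, hs1v⟩ : ∃ s1 : Fin k, (s1 : ℕ) = 2 * ℓ - (r : ℕ) := ⟨⟨_, by omega⟩, rfl⟩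
        have hsum : ∑ r' : Fin k, c r' * M r' s1 = c r * M r s1 := by
          refine Finset.sum_eq_single r (fun r' _ hne' => ?_) (fun h => absurd (mem_univ _) h)
          have hv : (r' : ℕ) ≠ (r : ℕ) := fun h => hne' (Fin.ext h)
          have hrk' := r'.isLt
          rw [hM0 r' s1 ?_ (Or.inr (by omega)), mul_zero]
          intro hdvd
          rcases hdvd_window _ hdvd with h | h | h <;> omega
        have h2 := hcol s1
        rw [hsum, hMkey r s1 ⟨1, by omega⟩ (Or.inr (by omega))] at h2
        exact (mul_eq_zero.mp h2).resolve_right (hXne _)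
      have hc0 : ∀ r : Fin k, (r : ℕ) = 0 → c r = 0 := by
        intro r hr
        obtain ⟨s0, hs0v⟩ : ∃ s0 : Fin k, (s0 : ℕ) = 0 := ⟨⟨0, by omega⟩, rfl⟩
        have hsum : ∑ r' : Fin k, c r' * M r' s0 = c r * M r s0 := by
          refine Finset.sum_eq_single r (fun r' _ hne' => ?_) (fun h => absurd (mem_univ _) h)
          have hv : (r' : ℕ) ≠ (r : ℕ) := fun h => hne' (Fin.ext h)
          have hrk' := r'.isLt
          rw [hM0 r' s0 ?_ (Or.inr (by omega)), mul_zero]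
          intro hdvd
          rcases hdvd_window _ hdvd with h | h | h <;> omega
        have h2 := hcol s0
        rw [hsum, hMkey r s0 ⟨0, by omega⟩ (Or.inr (by omega))] at h2
        exact (mul_eq_zero.mp h2).resolve_right (hXne _)
      have hcmid : ∀ r : Fin k, 1 ≤ (r : ℕ) → (r : ℕ) < ℓ → c r = c rℓ * cstar r := by
        intro r h1 h2
        obtain ⟨s2, hs2v⟩ : ∃ s2 : Fin k, (s2 : ℕ) = 2 * ℓ - (r : ℕ) := ⟨⟨_, by omega⟩, rfl⟩
        have hner : r ≠ rℓ := by
          intro h; rw [h, hrℓv] at h2; omega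
        have hsum : ∑ r' : Fin k, c r' * M r' s2 = c r * M r s2 + c rℓ * M rℓ s2 := by
          refine Finset.sum_eq_add_of_mem r rℓ (mem_univ _) (mem_univ _) hner
            (fun r' _ hc' => ?_)
          obtain ⟨ha, hb⟩ := hc'
          have hv1 : (r' : ℕ) ≠ (r : ℕ) := fun h => ha (Fin.ext h)
          have hv2 : (r' : ℕ) ≠ (rℓ : ℕ) := fun h => hb (Fin.ext h)
          have hrk' := r'.isLt
          by_cases hhigh : ℓ < (r' : ℕ)
          · rw [hchigh r' hhigh, zero_mul]
          · rw [hM0 r' s2 ?_ (Or.inl (by omega)), mul_zero]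
            intro hdvd
            rcases hdvd_window _ hdvd with h | h | h <;> omega
        have h2' := hcol s2
        rw [hsum, hMkey r s2 ⟨1, by omega⟩ (Or.inl (by omega)), hMhh rℓ s2 hrℓv (by omega)] at h2'
        rw [hcstarmid r h1 h2]
        have e1 : ℓ - (r : ℕ) = (s2 : ℕ) - ℓ := by omega
        have e2 : 2 * ℓ - (r : ℕ) = (s2 : ℕ) := by omega
        rw [e1, e2]
        have hXne' : (k : F) * g ^ (δ * ((r : ℕ) + (s2 : ℕ) * q)) ≠ 0 := hXne _
        apply mul_right_cancel₀ hXne'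
        have h3 : c r * ((k : F) * g ^ (δ * ((r : ℕ) + (s2 : ℕ) * q)))
            = -(c rℓ * Bv ((s2 : ℕ) - ℓ)) := by linear_combination h2'
        rw [h3]
        have h4 : c rℓ * (-Bv ((s2 : ℕ) - ℓ) * ((k : F) * g ^ (δ * ((r : ℕ) + (s2 : ℕ) * q)))⁻¹)
              * ((k : F) * g ^ (δ * ((r : ℕ) + (s2 : ℕ) * q)))
            = -(c rℓ * Bv ((s2 : ℕ) - ℓ))
              * (((k : F) * g ^ (δ * ((r : ℕ) + (s2 : ℕ) * q)))⁻¹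
                * ((k : F) * g ^ (δ * ((r : ℕ) + (s2 : ℕ) * q)))) := by ring
        rw [h4, inv_mul_cancel₀ hXne', mul_one]
      have hcall : ∀ r : Fin k, c r = c rℓ * cstar r := by
        intro r
        have hrk := r.isLt
        rcases (by omega : (r : ℕ) = 0 ∨ (1 ≤ (r : ℕ) ∧ (r : ℕ) < ℓ) ∨ (r : ℕ) = ℓ
            ∨ ℓ < (r : ℕ)) with h | h | h | h
        · rw [hc0 r h, hcstar0 r (Or.inl h), mul_zero]
        · exact hcmid r h.1 h.2
        · rw [hcstarl r h, mul_one]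
          congr 1
          exact Fin.ext (by rw [h, hrℓv])
        · rw [hchigh r h, hcstar0 r (Or.inr h), mul_zero]
      have hxw : x = c rℓ • w := by
        funext i
        rw [Pi.smul_apply, smul_eq_mul, hxi i, hw]
        rw [Finset.mul_sum]
        refine Finset.sum_congr rfl (fun r _ => ?_)
        rw [hcall r]; ring
      rw [hxw]
      exact Submodule.smul_mem _ _ (Submodule.mem_span_singleton_self w)
    · rw [Submodule.span_le, Set.singleton_subset_iff]
      exact Submodule.mem_inf.mpr ⟨hwC, hwD⟩
  rw [hHull]
  exact finrank_span_singleton hwne
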